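/- Let ω = e^{2πi/3} and for k ∈ ℂ, k ≠ 0, let P(k) = [[ωk, ω²k, k], [ω²k², ωk², k²], [1, 1, 1]] and 𝓛(k) = diag(−ωk, −ω²k, −k). Then for every τ ∈ ℝ, the limit as k → 0 (k ≠ 0) of P(k) · exp(τ·𝓛(k)) · P(k)^{-1} exists and equals the matrix [[1, −τ, 0], [0, 1, 0], [−τ, τ²/2, 1]]; in particular k = 0 is a removable singularity of the matrix-valued function k ↦ P(k) exp(τ𝓛(k)) P(k)^{-1}. -/

import Mathlib

open Matrix Filter Topology

/-- ω = e^{2πi/3}, a primitive cube root of unity. -/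
noncomputable def ω : ℂ := Complex.exp (2 * Real.pi * Complex.I / 3)

/-- The gauge-transformation matrix P(k). -/
noncomputable def Pmat (k : ℂ) : Matrix (Fin 3) (Fin 3) ℂ :=
  !![ω * k, ω^2 * k, k;
     ω^2 * k^2, ω * k^2, k^2;
     1, 1, 1]

/-- 𝓛(k) = diag(−ωk, −ω²k, −k). -/
noncomputable def Lcal (k : ℂ) : Matrix (Fin 3) (Fin 3) ℂ :=
  Matrix.diagonal ![-(ω * k), -(ω^2 * k), -k]

/-- A(k) = P(k) 𝓛(k) P(k)⁻¹, extended over k = 0. -/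
def Amat (k : ℂ) : Matrix (Fin 3) (Fin 3) ℂ :=
  !![0, -1, 0; 0, 0, -k^3; -1, 0, 0]

lemma omega_pow_three : ω ^ 3 = 1 := by
  rw [ω, ← Complex.exp_nat_mul]
  rw [show (3 : ℕ) * (2 * (Real.pi : ℂ) * Complex.I / 3) = 2 * Real.pi * Complex.I by
    push_cast; ring]
  exact Complex.exp_two_pi_mul_I

lemma omega_ne_one : ω ≠ 1 := by
  intro h
  rw [ω, Complex.exp_eq_one_iff] at h
  obtain ⟨n, hn⟩ := h
  have hπ : (Real.pi : ℂ) ≠ 0 := by exact_mod_cast Real.pi_ne_zero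
  have h2πI : (2 * (Real.pi : ℂ) * Complex.I) ≠ 0 :=
    mul_ne_zero (mul_ne_zero two_ne_zero hπ) Complex.I_ne_zero
  have h2 : ((3 * n : ℤ) : ℂ) * (2 * Real.pi * Complex.I)
      = ((1 : ℤ) : ℂ) * (2 * Real.pi * Complex.I) := by
    push_cast; linear_combination (-3 : ℂ) * hn
  have h3 := mul_right_cancel₀ h2πI h2
  have h4 : (3 * n : ℤ) = 1 := Int.cast_injective h3
  omega

lemma omega_ne_zero : ω ≠ 0 := Complex.exp_ne_zero _

lemma det_Pmat (k : ℂ) : (Pmat k).det = 3 * (ω ^ 2 - ω) * k ^ 3 := by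
  simp [Pmat, Matrix.det_fin_three]
  ring_nf
  linear_combination (-(k^3) * ω) * omega_pow_three

lemma key (k : ℂ) : Pmat k * Lcal k = Amat k * Pmat k := by
  have hL : Lcal k = !![-(ω * k), 0, 0; 0, -(ω^2 * k), 0; 0, 0, -k] := by
    ext i j
    fin_cases i <;> fin_cases j <;>
      simp [Lcal, Matrix.diagonal, Matrix.vecHead, Matrix.vecTail]
  have h4 : ω ^ 4 = ω := by
    calc ω ^ 4 = ω ^ 3 * ω := by ring
    _ = ω := by rw [omega_pow_three, one_mul]
  rw [hL]
  ext i j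
  fin_cases i <;> fin_cases j <;>
    simp [Pmat, Amat, Matrix.mul_apply, Fin.sum_univ_three,
      Matrix.vecHead, Matrix.vecTail, omega_pow_three, h4] <;>
    (try ring) <;> ((try ring_nf); simp [omega_pow_three, h4]) <;> try ring

lemma det_ne (hk : (k : ℂ) ≠ 0) : IsUnit (Pmat k).det := by
  rw [det_Pmat, isUnit_iff_ne_zero]
  have hsub : ω ^ 2 - ω ≠ 0 := by
    have : ω ^ 2 - ω = ω * (ω - 1) := by ring
    rw [this]
    exact mul_ne_zero omega_ne_zero (sub_ne_zero.mpr omega_ne_one)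
  exact mul_ne_zero (mul_ne_zero three_ne_zero hsub) (pow_ne_zero 3 hk)

lemma conj_eq (τ : ℝ) {k : ℂ} (hk : k ≠ 0) :
    Pmat k * NormedSpace.exp ((τ : ℂ) • Lcal k) * (Pmat k)⁻¹
      = NormedSpace.exp ((τ : ℂ) • Amat k) := by
  have hdet := det_ne hk
  have hU : IsUnit (Pmat k) := (Matrix.isUnit_iff_isUnit_det _).mpr hdet
  have h0 : Pmat k * Lcal k * (Pmat k)⁻¹ = Amat k := by
    rw [key, Matrix.mul_assoc, Matrix.mul_nonsing_inv _ hdet, Matrix.mul_one]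
  have h1 : Pmat k * ((τ : ℂ) • Lcal k) * (Pmat k)⁻¹ = (τ : ℂ) • Amat k := by
    rw [Matrix.mul_smul, Matrix.smul_mul, h0]
  rw [← h1]
  exact (Matrix.exp_conj (Pmat k) ((τ : ℂ) • Lcal k) hU).symm

lemma exp_A0 (τ : ℝ) :
    NormedSpace.exp ((τ : ℂ) • Amat 0)
      = !![1, -(τ : ℂ), 0; 0, 1, 0; -(τ : ℂ), (τ : ℂ)^2/2, 1] := by
  set N : Matrix (Fin 3) (Fin 3) ℂ := (τ : ℂ) • Amat 0 with hN
  have hNval : N = !![0, -(τ : ℂ), 0; 0, 0, 0; -(τ : ℂ), 0, 0] := by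
    ext i j
    fin_cases i <;> fin_cases j <;>
      simp [hN, Amat, Matrix.vecHead, Matrix.vecTail]
  have hN2 : N ^ 2 = !![0, 0, 0; 0, 0, 0; 0, (τ : ℂ)^2, 0] := by
    rw [pow_two, hNval]
    ext i j
    fin_cases i <;> fin_cases j <;>
      simp [Matrix.mul_apply, Fin.sum_univ_three, Matrix.vecHead, Matrix.vecTail] <;> ring
  have hN3 : N ^ 3 = 0 := by
    rw [pow_succ, hN2, hNval]
    ext i j
    fin_cases i <;> fin_cases j <;>
      simp [Matrix.mul_apply, Fin.sum_univ_three, Matrix.vecHead, Matrix.vecTail]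
  rw [NormedSpace.exp_eq_tsum ℂ]
  beta_reduce
  have hzero : ∀ n ∉ Finset.range 3, ((n.factorial : ℂ)⁻¹) • N ^ n = 0 := by
    intro n hn
    rw [Finset.mem_range, not_lt] at hn
    have : N ^ n = 0 := by
      obtain ⟨m, rfl⟩ := Nat.exists_eq_add_of_le hn
      rw [pow_add, hN3, zero_mul]
    rw [this, smul_zero]
  rw [tsum_eq_sum hzero]
  rw [Finset.sum_range_succ, Finset.sum_range_succ, Finset.sum_range_one]
  rw [hN2, hNval]
  ext i j
  fin_cases i <;> fin_cases j <;>
    simp [Matrix.one_fin_three, Matrix.vecHead, Matrix.vecTail, Nat.factorial] <;> ring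

/-- As k → 0 (k ≠ 0), P(k) exp(τ𝓛(k)) P(k)⁻¹ converges to
[[1, −τ, 0], [0, 1, 0], [−τ, τ²/2, 1]]; in particular k = 0 is a removable
singularity of this matrix-valued function. -/
theorem tendsto_P_exp_Pinv (τ : ℝ) :
    Tendsto (fun k : ℂ => Pmat k * NormedSpace.exp ((τ : ℂ) • Lcal k) * (Pmat k)⁻¹)
      (𝓝[≠] (0 : ℂ))
      (𝓝 (!![1, -(τ : ℂ), 0; 0, 1, 0; -(τ : ℂ), (τ : ℂ)^2/2, 1])) := by
  have hAcont : Continuous fun k : ℂ => (τ : ℂ) • Amat k := by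
    suffices h : Continuous fun k : ℂ => Amat k from h.const_smul (τ : ℂ)
    apply continuous_matrix
    intro i j
    fin_cases i <;> fin_cases j <;>
      simp [Amat, Matrix.vecHead, Matrix.vecTail] <;> fun_prop
  have hexp : Continuous (NormedSpace.exp : Matrix (Fin 3) (Fin 3) ℂ → _) := by
    letI : SeminormedRing (Matrix (Fin 3) (Fin 3) ℂ) := Matrix.linftyOpSemiNormedRing
    letI : NormedRing (Matrix (Fin 3) (Fin 3) ℂ) := Matrix.linftyOpNormedRing
    letI : NormedAlgebra ℂ (Matrix (Fin 3) (Fin 3) ℂ) := Matrix.linftyOpNormedAlgebra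
    exact continuous_iff_continuousAt.mpr fun x => (NormedSpace.exp_analytic (𝕂 := ℂ) x).continuousAt
  have hlim : Tendsto (fun k : ℂ => NormedSpace.exp ((τ : ℂ) • Amat k)) (𝓝[≠] (0 : ℂ))
      (𝓝 (NormedSpace.exp ((τ : ℂ) • Amat 0))) :=
    ((hexp.comp hAcont).tendsto 0).mono_left nhdsWithin_le_nhds
  rw [← exp_A0 τ]
  apply Tendsto.congr' _ hlim
  filter_upwards [self_mem_nhdsWithin] with k hk
  exact (conj_eq τ hk).symm
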